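/- For every integer k ≥ 1 there exists a finite simple graph G with maximum degree at most 1 and with exactly ⌊3(k−1)/2⌋ vertices such that every induced subgraph H of G has rep(H) ≤ k−1. (Together with the matching upper bound, this shows g(k,1) = h(k,1) = f(k,1) = ⌊3(k−1)/2⌋. A witnessing graph is the disjoint union of ⌊(k−1)/2⌋ copies of an edge K_2 and ⌈(k−1)/2⌉ isolated vertices.) -/

import Mathlib

/-- The degree of a vertex: the number of its neighbors (graph on a finite type). -/
noncomputable def ndeg {V : Type*} (G : SimpleGraph V) (v : V) : ℕ :=
  (G.neighborSet v).ncard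

/-- The number of vertices of `G` whose degree equals `j`. -/
noncomputable def repCount {V : Type*} (G : SimpleGraph V) (j : ℕ) : ℕ :=
  {v : V | ndeg G v = j}.ncard

/-- For every `k ≥ 1` there is a graph with maximum degree at most `1` and exactly
`⌊3(k-1)/2⌋` vertices in which every induced subgraph has every degree value attained by at
most `k-1` vertices, i.e. `g(k,1) ≥ ⌊3(k-1)/2⌋`. -/
theorem stmt_16 (k : ℕ) (hk : 1 ≤ k) :
    ∃ (n : ℕ) (G : SimpleGraph (Fin n)),
      (∀ v, ndeg G v ≤ 1) ∧
      n = 3 * (k - 1) / 2 ∧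
      ∀ (s : Set (Fin n)) (j : ℕ), repCount (G.induce s) j ≤ k - 1 := by
  classical
  set m := k - 1 with hm
  set e := m / 2 with he
  set n := 3 * m / 2 with hn
  let G : SimpleGraph (Fin n) :=
    { Adj := fun a b => (a : ℕ) ≠ (b : ℕ) ∧ (a : ℕ) / 2 = (b : ℕ) / 2 ∧ (a : ℕ) < 2 * e,
      symm := ⟨by rintro a b ⟨h1, h2, h3⟩; exact ⟨fun h => h1 h.symm, h2.symm, by omega⟩⟩,
      loopless := ⟨by rintro a ⟨h1, -⟩; exact h1 rfl⟩ }
  refine ⟨n, G, ?_, rfl, ?_⟩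
  · -- max degree ≤ 1
    intro v
    rw [ndeg]
    refine (Set.ncard_le_one_iff (Set.toFinite _)).mpr ?_
    rintro a b ⟨h1, h2, h3⟩ ⟨h4, h5, h6⟩
    exact Fin.ext (by omega)
  · intro s j
    rw [repCount]
    -- degrees in the induced graph are ≤ 1
    have hdeg1 : ∀ v : ↥s, ndeg (SimpleGraph.induce s G) v ≤ 1 := by
      intro v
      rw [ndeg]
      refine (Set.ncard_le_one_iff (Set.toFinite _)).mpr ?_
      intro a b ha hb
      simp only [SimpleGraph.mem_neighborSet, SimpleGraph.comap_adj,
        Function.Embedding.coe_subtype] at ha hb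
      obtain ⟨h1, h2, h3⟩ := ha
      obtain ⟨h4, h5, h6⟩ := hb
      exact Subtype.ext (Fin.ext (by omega))
    have htarget : ((Finset.Iio m : Finset ℕ) : Set ℕ).ncard = m := by
      rw [Set.ncard_coe_finset, Nat.card_Iio]
    rw [← htarget]
    rcases j with _ | _ | j
    · -- degree 0 vertices
        refine Set.ncard_le_ncard_of_injOn
          (fun v : ↥s => if ((v : Fin n) : ℕ) < 2 * e then ((v : Fin n) : ℕ) / 2
            else e + (((v : Fin n) : ℕ) - 2 * e)) ?_ ?_ (Set.toFinite _)
        · intro v _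
          have hv : ((v : Fin n) : ℕ) < n := (v : Fin n).isLt
          simp only [Finset.coe_Iio, Set.mem_Iio]
          split <;> omega
        · intro v hv w hw hfvw
          have hv0 : (SimpleGraph.neighborSet (SimpleGraph.induce s G) v).ncard = 0 := hv
          have hw0 : (SimpleGraph.neighborSet _ w).ncard = 0 := hw
          rw [Set.ncard_eq_zero (Set.toFinite _)] at hv0
          by_cases hlt : ((v : Fin n) : ℕ) < 2 * e
          · by_cases hlt' : ((w : Fin n) : ℕ) < 2 * e
            · simp only [hlt, hlt', if_pos] at hfvw
              by_contra hne
              have hne' : ((v : Fin n) : ℕ) ≠ ((w : Fin n) : ℕ) := by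
                intro h
                exact hne (Subtype.ext (Fin.ext h))
              have : w ∈ SimpleGraph.neighborSet (SimpleGraph.induce s G) v := by
                simp only [SimpleGraph.mem_neighborSet, SimpleGraph.comap_adj,
                  Function.Embedding.coe_subtype]
                exact show ((v : Fin n) : ℕ) ≠ ((w : Fin n) : ℕ) ∧ _ ∧ _ from
                  ⟨hne', by omega, hlt⟩
              rw [hv0] at this
              exact this.elim
            · simp only [hlt, hlt', if_pos, if_neg, not_false_iff] at hfvw
              have hv2 : ((v : Fin n) : ℕ) / 2 < e := by omega
              omega
          · by_cases hlt' : ((w : Fin n) : ℕ) < 2 * e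
            · simp only [hlt, hlt', if_pos, if_neg, not_false_iff] at hfvw
              have hw2 : ((w : Fin n) : ℕ) / 2 < e := by omega
              omega
            · simp only [hlt, hlt', if_neg, not_false_iff] at hfvw
              exact Subtype.ext (Fin.ext (by omega))
    · -- degree 1 vertices
        refine Set.ncard_le_ncard_of_injOn (fun v : ↥s => ((v : Fin n) : ℕ)) ?_ ?_
          (Set.toFinite _)
        · intro v hv
          have hv1 : (SimpleGraph.neighborSet (SimpleGraph.induce s G) v).ncard = 1 := hv
          have hne : (SimpleGraph.neighborSet (SimpleGraph.induce s G) v).Nonempty :=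
            Set.nonempty_of_ncard_ne_zero (by omega)
          obtain ⟨w, hw⟩ := hne
          simp only [SimpleGraph.mem_neighborSet, SimpleGraph.comap_adj,
            Function.Embedding.coe_subtype] at hw
          obtain ⟨h1, h2, h3⟩ := hw
          simp only [Finset.coe_Iio, Set.mem_Iio]
          omega
        · intro v _ w _ hvw
          exact Subtype.ext (Fin.ext hvw)
    · -- j ≥ 2 : empty
      have : {v : ↥s | ndeg (SimpleGraph.induce s G) v = j + 2} = ∅ := by
        ext v
        simp only [Set.mem_setOf_eq, Set.mem_empty_iff_false, iff_false]
        intro h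
        have := hdeg1 v
        omega
      rw [this, Set.ncard_empty]
      exact Nat.zero_le _
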